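/- Let n = n0 + n1 and let the data (X_1,Y_1),…,(X_n,Y_n),(X_{n+1},Y_{n+1}) be i.i.d. from an arbitrary distribution P on ℝ^d × ℝ. Let μ̂ be any measurable function of the first n0 data points (a fitted regression function), let R_i = |Y_i − μ̂(X_i)| for i = n0+1,…,n, and let q̂ be the ⌈(1−α)(n1+1)⌉-th smallest value of R_{n0+1},…,R_n (defined as +∞ if ⌈(1−α)(n1+1)⌉ > n1). Define the split conformal interval Ĉ_n(x) = [μ̂(x) − q̂, μ̂(x) + q̂]. Then P(Y_{n+1} ∈ Ĉ_n(X_{n+1})) ≥ 1 − α. -/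

import Mathlib

open MeasureTheory
open scoped ENNReal

noncomputable section

open Classical in
/-- The `k`-th smallest of the values `R i`, `i ∈ s`, valued in `ℝ≥0∞`;
equals `⊤` when `k` exceeds `s.card`. -/
def kthSmallest {ι : Type*} (s : Finset ι) (R : ι → ℝ≥0∞) (k : ℕ) : ℝ≥0∞ :=
  sInf {t : ℝ≥0∞ | k ≤ (s.filter fun i => R i ≤ t).card}

lemma le_kthSmallest_of_count_lt {n : ℕ} (R : Fin n → ℝ≥0∞) (z : ℝ≥0∞) (k : ℕ)
    (h : ((Finset.univ : Finset (Fin n)).filter fun i => R i < z).card < k) :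
    z ≤ kthSmallest Finset.univ R k := by
  classical
  refine le_sInf fun t ht => ?_
  simp only [Set.mem_setOf_eq] at ht
  by_contra hzt
  push_neg at hzt
  have hsub : ((Finset.univ : Finset (Fin n)).filter fun i => R i ≤ t) ⊆
      (Finset.univ : Finset (Fin n)).filter fun i => R i < z := by
    intro i hi; simp only [Finset.mem_filter] at hi ⊢
    exact ⟨hi.1, lt_of_le_of_lt hi.2 hzt⟩
  have := ht.trans (Finset.card_le_card hsub)
  omega

lemma measurePreserving_comp_perm {ι : Type*} [Fintype ι] {β : Type*} [MeasurableSpace β]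
    (μ : Measure β) [SigmaFinite μ] (σ : Equiv.Perm ι) :
    MeasurePreserving (fun g : ι → β => g ∘ σ)
      (Measure.pi fun _ : ι => μ) (Measure.pi fun _ : ι => μ) := by
  have key : (fun g : ι → β => g ∘ σ) =
      ⇑(MeasurableEquiv.piCongrLeft (fun _ : ι => β) σ.symm) := by
    funext g
    funext j
    have h2 := MeasurableEquiv.piCongrLeft_apply_apply (β := fun _ : ι => β) σ.symm g (σ j)
    simpa using h2.symm
  rw [key]
  exact measurePreserving_piCongrLeft (fun _ : ι => μ) σ.symm

lemma rank_count_lemma {ι : Type*} [LinearOrder ι] (J : Finset ι) (R : ι → ℝ≥0∞)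
    (k : ℕ) (hk : k ≤ J.card) :
    k ≤ (J.filter fun j => (J.filter fun i => i ≠ j ∧ R i < R j).card < k).card := by
  classical
  set lex : ι → ι → Prop := fun i j => R i < R j ∨ (R i = R j ∧ i < j) with hlex
  have lexIrrefl : ∀ i, ¬ lex i i := by
    intro i h
    rcases h with h | ⟨_, h⟩
    · exact lt_irrefl _ h
    · exact lt_irrefl _ h
  have lexTrans : ∀ a b c, lex a b → lex b c → lex a c := by
    intro a b c hab hbc
    rcases hab with h1 | ⟨h1, h1'⟩ <;> rcases hbc with h2 | ⟨h2, h2'⟩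
    · exact Or.inl (h1.trans h2)
    · exact Or.inl (h2 ▸ h1)
    · exact Or.inl (h1 ▸ h2)
    · exact Or.inr ⟨h1.trans h2, h1'.trans h2'⟩
  have lexTotal : ∀ a b, a ≠ b → lex a b ∨ lex b a := by
    intro a b hab
    rcases lt_trichotomy (R a) (R b) with h | h | h
    · exact Or.inl (Or.inl h)
    · rcases lt_or_gt_of_ne hab with h' | h'
      · exact Or.inl (Or.inr ⟨h, h'⟩)
      · exact Or.inr (Or.inr ⟨h.symm, h'⟩)
    · exact Or.inr (Or.inl h)
  set key : ι → ℕ := fun j => (J.filter fun i => lex i j).card with hkey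
  have keyMono : ∀ a ∈ J, ∀ b ∈ J, lex a b → key a < key b := by
    intro a ha b hb hab
    apply Finset.card_lt_card
    constructor
    · intro i hi
      simp only [Finset.mem_filter] at hi ⊢
      exact ⟨hi.1, lexTrans _ _ _ hi.2 hab⟩
    · intro hsub
      have : a ∈ J.filter fun i => lex i b := Finset.mem_filter.2 ⟨ha, hab⟩
      have := hsub this
      simp only [Finset.mem_filter] at this
      exact lexIrrefl a this.2
  have keyInj : Set.InjOn key ↑J := by
    intro a ha b hb hab
    by_contra hne
    rcases lexTotal a b hne with h | h
    · exact absurd hab (Nat.ne_of_lt (keyMono a ha b hb h))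
    · exact absurd hab.symm (Nat.ne_of_lt (keyMono b hb a ha h))
  have keyLt : ∀ j ∈ J, key j < J.card := by
    intro j hj
    have hsub : (J.filter fun i => lex i j) ⊆ J.erase j := by
      intro i hi
      simp only [Finset.mem_filter] at hi
      refine Finset.mem_erase.2 ⟨?_, hi.1⟩
      rintro rfl; exact lexIrrefl i hi.2
    calc key j ≤ (J.erase j).card := Finset.card_le_card hsub
    _ < J.card := Finset.card_erase_lt_of_mem hj
  have himg : J.image key = Finset.range J.card := by
    apply Finset.eq_of_subset_of_card_le
    · intro v hv
      simp only [Finset.mem_image] at hv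
      obtain ⟨j, hj, rfl⟩ := hv
      exact Finset.mem_range.2 (keyLt j hj)
    · rw [Finset.card_range, Finset.card_image_of_injOn keyInj]
  have hcardk : (J.filter fun j => key j < k).card = k := by
    have h1 : (J.filter fun j => key j < k).image key = Finset.range k := by
      ext v
      simp only [Finset.mem_image, Finset.mem_filter, Finset.mem_range]
      constructor
      · rintro ⟨j, ⟨_, hlt⟩, rfl⟩; exact hlt
      · intro hv
        have : v ∈ J.image key := by
          rw [himg]; exact Finset.mem_range.2 (lt_of_lt_of_le hv hk)
        obtain ⟨j, hj, rfl⟩ := Finset.mem_image.1 this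
        exact ⟨j, ⟨hj, hv⟩, rfl⟩
    have h2 : ((J.filter fun j => key j < k).image key).card
        = (J.filter fun j => key j < k).card :=
      Finset.card_image_of_injOn (keyInj.mono (by
        intro a ha
        simp only [Finset.coe_filter, Set.mem_setOf_eq] at ha
        exact ha.1))
    rw [h1, Finset.card_range] at h2
    omega
  have hsub : (J.filter fun j => key j < k) ⊆
      J.filter fun j => (J.filter fun i => i ≠ j ∧ R i < R j).card < k := by
    intro j hj
    simp only [Finset.mem_filter] at hj ⊢
    refine ⟨hj.1, lt_of_le_of_lt ?_ hj.2⟩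
    apply Finset.card_le_card
    intro i hi
    simp only [Finset.mem_filter] at hi ⊢
    exact ⟨hi.1, Or.inl hi.2.2⟩
  have := Finset.card_le_card hsub
  omega

open Classical in
lemma count_le_sum_measure {Ω : Type*} [MeasurableSpace Ω] (μ : Measure Ω) [IsProbabilityMeasure μ]
    {ι : Type*} (J : Finset ι) (E : ι → Set Ω) (hE : ∀ j ∈ J, MeasurableSet (E j)) (k : ℕ)
    (h : ∀ ω, k ≤ (J.filter fun j => ω ∈ E j).card) :
    (k : ℝ≥0∞) ≤ ∑ j ∈ J, μ (E j) := by
  calc (k : ℝ≥0∞) = ∫⁻ _, (k : ℝ≥0∞) ∂μ := by simp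
  _ ≤ ∫⁻ ω, ∑ j ∈ J, (E j).indicator (fun _ => (1 : ℝ≥0∞)) ω ∂μ := by
      apply lintegral_mono
      intro ω
      calc (k : ℝ≥0∞) ≤ (((J.filter fun j => ω ∈ E j).card : ℕ) : ℝ≥0∞) := by
            exact_mod_cast h ω
      _ = ∑ j ∈ J, if ω ∈ E j then (1 : ℝ≥0∞) else 0 := (Finset.sum_boole _ _).symm
      _ = ∑ j ∈ J, (E j).indicator (fun _ => (1 : ℝ≥0∞)) ω := by
            refine Finset.sum_congr rfl fun j _ => ?_
            rw [Set.indicator_apply]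
  _ = ∑ j ∈ J, ∫⁻ ω, (E j).indicator (fun _ => (1 : ℝ≥0∞)) ω ∂μ :=
      lintegral_finset_sum _ fun j hj => measurable_const.indicator (hE j hj)
  _ = ∑ j ∈ J, μ (E j) := by
      refine Finset.sum_congr rfl fun j hj => ?_
      rw [lintegral_indicator (hE j hj), setLIntegral_one]

section Conformal

variable {d n0 n1 : ℕ}

/-- The fitted function's training data: the first `n0` coordinates. -/
def tr0 (data : Fin (n0 + n1 + 1) → (Fin d → ℝ) × ℝ) : Fin n0 → (Fin d → ℝ) × ℝ :=
  fun i => data (Fin.castLE (Nat.le_add_right_of_le (Nat.le_add_right n0 n1)) i)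

/-- Residual of the point `x` w.r.t. the model fitted on the first `n0` coordinates. -/
def resid (μh : (Fin n0 → (Fin d → ℝ) × ℝ) → (Fin d → ℝ) → ℝ)
    (data : Fin (n0 + n1 + 1) → (Fin d → ℝ) × ℝ) (x : (Fin d → ℝ) × ℝ) : ℝ≥0∞ :=
  ENNReal.ofReal |x.2 - μh (tr0 data) x.1|

/-- The "bad rank" event for index `j`. -/
def Ev (μh : (Fin n0 → (Fin d → ℝ) × ℝ) → (Fin d → ℝ) → ℝ) (k : ℕ)
    (j : Fin (n0 + n1 + 1)) : Set (Fin (n0 + n1 + 1) → (Fin d → ℝ) × ℝ) :=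
  {data | ((Finset.univ : Finset (Fin (n0 + n1 + 1))).filter fun i : Fin (n0 + n1 + 1) =>
      n0 ≤ (i : ℕ) ∧ i ≠ j ∧ resid μh data (data i) < resid μh data (data j)).card < k}

lemma tr0_comp (data : Fin (n0 + n1 + 1) → (Fin d → ℝ) × ℝ)
    (σ : Equiv.Perm (Fin (n0 + n1 + 1))) (hσ : ∀ i : Fin (n0 + n1 + 1), (i : ℕ) < n0 → σ i = i) :
    tr0 (d := d) (data ∘ σ) = tr0 data := by
  funext i
  simp only [tr0, Function.comp_apply]
  rw [hσ _ (by simpa using i.isLt)]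

lemma resid_comp (μh : (Fin n0 → (Fin d → ℝ) × ℝ) → (Fin d → ℝ) → ℝ)
    (data : Fin (n0 + n1 + 1) → (Fin d → ℝ) × ℝ)
    (σ : Equiv.Perm (Fin (n0 + n1 + 1))) (hσ : ∀ i : Fin (n0 + n1 + 1), (i : ℕ) < n0 → σ i = i) :
    resid μh (data ∘ σ) = resid μh data := by
  funext x
  simp only [resid, tr0_comp data σ hσ]

end Conformal

/-- **Split conformal prediction has distribution-free marginal coverage.**
Data `(X_1,Y_1),…,(X_{n+1},Y_{n+1})` (with `n = n0 + n1`) are i.i.d. from `P`; `μ̂` is fitted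
on the first `n0` points; `q̂` is the `⌈(1-α)(n1+1)⌉`-th smallest holdout residual (`+∞` if the
index exceeds `n1`); then `Y_{n+1} ∈ [μ̂(X_{n+1}) - q̂, μ̂(X_{n+1}) + q̂]` with probability
at least `1 - α`. -/
theorem split_conformal_marginal_coverage (d n0 n1 : ℕ) (α : ℝ) (hα : α ∈ Set.Ioo (0 : ℝ) 1)
    (P : Measure ((Fin d → ℝ) × ℝ)) [IsProbabilityMeasure P]
    (μhat : (Fin n0 → (Fin d → ℝ) × ℝ) → (Fin d → ℝ) → ℝ)
    (hμhat : Measurable fun p : (Fin n0 → (Fin d → ℝ) × ℝ) × (Fin d → ℝ) => μhat p.1 p.2) :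
    ENNReal.ofReal (1 - α) ≤
      (Measure.pi fun _ : Fin (n0 + n1 + 1) => P)
        {data |
          ENNReal.ofReal
              |(data (Fin.last (n0 + n1))).2 -
                μhat (fun i => data (Fin.castLE (by omega) i)) (data (Fin.last (n0 + n1))).1| ≤
            kthSmallest (Finset.univ : Finset (Fin n1))
              (fun i =>
                ENNReal.ofReal
                  |(data ((Fin.natAdd n0 i).castSucc)).2 -
                    μhat (fun j => data (Fin.castLE (by omega) j))
                      (data ((Fin.natAdd n0 i).castSucc)).1|)
              ⌈(1 - α) * ((n1 : ℝ) + 1)⌉₊} := by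
    classical
  set k : ℕ := ⌈(1 - α) * ((n1 : ℝ) + 1)⌉₊ with hkdef
  set μ : Measure (Fin (n0 + n1 + 1) → (Fin d → ℝ) × ℝ) :=
    Measure.pi fun _ : Fin (n0 + n1 + 1) => P with hμdef
  set lst : Fin (n0 + n1 + 1) := Fin.last (n0 + n1) with hlst
  set J : Finset (Fin (n0 + n1 + 1)) :=
    Finset.univ.filter (fun i : Fin (n0 + n1 + 1) => n0 ≤ (i : ℕ)) with hJ
  -- basic arithmetic facts
  have hn1pos : (0 : ℝ) < (n1 : ℝ) + 1 := by positivity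
  have hk_le : k ≤ n1 + 1 := by
    rw [hkdef]
    refine Nat.ceil_le.2 ?_
    have : (1 - α) * ((n1 : ℝ) + 1) ≤ 1 * ((n1 : ℝ) + 1) := by
      apply mul_le_mul_of_nonneg_right _ (le_of_lt hn1pos)
      linarith [hα.1]
    push_cast
    linarith
  have hk_ge : (1 - α) * ((n1 : ℝ) + 1) ≤ k := Nat.le_ceil _
  have hJcard : J.card = n1 + 1 := by
    have : J = Finset.map
        ⟨fun i : Fin (n1 + 1) => (⟨n0 + i.val, by omega⟩ : Fin (n0 + n1 + 1)),
          fun a b hab => by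
            simp only [Fin.mk.injEq] at hab
            exact Fin.ext (by omega)⟩ Finset.univ := by
      ext x
      simp only [hJ, Finset.mem_filter, Finset.mem_univ, true_and, Finset.mem_map,
        Function.Embedding.coeFn_mk]
      constructor
      · intro hx
        exact ⟨⟨x.val - n0, by omega⟩, Fin.ext (by show n0 + (x.val - n0) = x.val; omega)⟩
      · rintro ⟨i, rfl⟩
        show n0 ≤ n0 + i.val; omega
    rw [this, Finset.card_map, Finset.card_univ, Fintype.card_fin]
  have hlstJ : lst ∈ J := by
    simp only [hJ, Finset.mem_filter, Finset.mem_univ, true_and, hlst, Fin.val_last]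
    omega
  -- measurability of residuals
  have hres_meas : ∀ i : Fin (n0 + n1 + 1),
      Measurable fun data : Fin (n0 + n1 + 1) → (Fin d → ℝ) × ℝ =>
        resid μhat data (data i) := by
    intro i
    have h1 : Measurable fun data : Fin (n0 + n1 + 1) → (Fin d → ℝ) × ℝ => tr0 (d := d) data :=
      measurable_pi_lambda _ fun j => measurable_pi_apply _
    have h2 : Measurable fun data : Fin (n0 + n1 + 1) → (Fin d → ℝ) × ℝ => data i :=
      measurable_pi_apply i
    have h3 : Measurable fun data : Fin (n0 + n1 + 1) → (Fin d → ℝ) × ℝ =>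
        μhat (tr0 data) (data i).1 := hμhat.comp (h1.prodMk h2.fst)
    have h4 : Measurable fun data : Fin (n0 + n1 + 1) → (Fin d → ℝ) × ℝ =>
        (data i).2 - μhat (tr0 data) (data i).1 := h2.snd.sub h3
    exact ENNReal.measurable_ofReal.comp h4.abs
  -- measurability of the events
  have hEmeas : ∀ j : Fin (n0 + n1 + 1), MeasurableSet (Ev μhat k j) := by
    intro j
    have hcount : Measurable fun data : Fin (n0 + n1 + 1) → (Fin d → ℝ) × ℝ =>
        ((Finset.univ : Finset (Fin (n0 + n1 + 1))).filter fun i : Fin (n0 + n1 + 1) =>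
          n0 ≤ (i : ℕ) ∧ i ≠ j ∧ resid μhat data (data i) < resid μhat data (data j)).card := by
      simp only [Finset.card_filter]
      refine Finset.measurable_sum _ fun i _ => ?_
      refine Measurable.ite ?_ measurable_const measurable_const
      by_cases hA : n0 ≤ (i : ℕ) ∧ i ≠ j
      · have hset : {data : Fin (n0 + n1 + 1) → (Fin d → ℝ) × ℝ |
            n0 ≤ (i : ℕ) ∧ i ≠ j ∧ resid μhat data (data i) < resid μhat data (data j)} =
            {data | resid μhat data (data i) < resid μhat data (data j)} := by
          ext data; simp [hA.1, hA.2]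
        rw [hset]
        exact measurableSet_lt (hres_meas i) (hres_meas j)
      · have hset : {data : Fin (n0 + n1 + 1) → (Fin d → ℝ) × ℝ |
            n0 ≤ (i : ℕ) ∧ i ≠ j ∧ resid μhat data (data i) < resid μhat data (data j)} =
            (∅ : Set _) := by
          ext data; simp only [Set.mem_setOf_eq, Set.mem_empty_iff_false, iff_false]
          tauto
        rw [hset]
        exact MeasurableSet.empty
    exact hcount measurableSet_Iio
  -- swap preimage identity
  have hpre : ∀ j ∈ J, (fun data : Fin (n0 + n1 + 1) → (Fin d → ℝ) × ℝ =>
      data ∘ (Equiv.swap j lst)) ⁻¹' (Ev μhat k lst) = Ev μhat k j := by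
    intro j hj
    have hjn0 : n0 ≤ (j : ℕ) := by
      simpa only [hJ, Finset.mem_filter, Finset.mem_univ, true_and] using hj
    set σ : Equiv.Perm (Fin (n0 + n1 + 1)) := Equiv.swap j lst with hσdef
    have hσfix : ∀ i : Fin (n0 + n1 + 1), (i : ℕ) < n0 → σ i = i := by
      intro i hi
      refine Equiv.swap_apply_of_ne_of_ne ?_ ?_
      · intro h; rw [h] at hi; omega
      · intro h; rw [h] at hi; simp only [hlst, Fin.val_last] at hi; omega
    ext data
    have hres : resid μhat (data ∘ σ) = resid μhat data := resid_comp μhat data σ hσfix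
    simp only [Set.mem_preimage, Ev, Set.mem_setOf_eq, Function.comp_apply, hres]
    have hσlst : σ lst = j := Equiv.swap_apply_right j lst
    rw [hσlst]
    have hcards : ((Finset.univ : Finset (Fin (n0 + n1 + 1))).filter
          fun i : Fin (n0 + n1 + 1) =>
            n0 ≤ (i : ℕ) ∧ i ≠ lst ∧ resid μhat data (data (σ i)) < resid μhat data (data j)).card
        = ((Finset.univ : Finset (Fin (n0 + n1 + 1))).filter
          fun i : Fin (n0 + n1 + 1) =>
            n0 ≤ (i : ℕ) ∧ i ≠ j ∧ resid μhat data (data i) < resid μhat data (data j)).card := by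
      refine Finset.card_equiv σ fun i => ?_
      simp only [Finset.mem_filter, Finset.mem_univ, true_and]
      constructor
      · rintro ⟨h1, h2, h3⟩
        refine ⟨?_, ?_, h3⟩
        · by_cases hij : i = j
          · subst hij; rw [hσdef, Equiv.swap_apply_left]
            simp only [hlst, Fin.val_last]; omega
          · rw [hσdef, Equiv.swap_apply_of_ne_of_ne hij h2]; exact h1
        · rw [← hσlst]; exact fun hc => h2 (σ.injective hc)
      · rintro ⟨h1, h2, h3⟩
        have hilst : i ≠ lst := by
          intro hc; apply h2; rw [hc, hσlst]
        refine ⟨?_, hilst, h3⟩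
        by_cases hij : i = j
        · subst hij; exact hjn0
        · rwa [hσdef, Equiv.swap_apply_of_ne_of_ne hij hilst] at h1
    rw [hcards]
  -- measure equality across swaps
  have hμeq : ∀ j ∈ J, μ (Ev μhat k j) = μ (Ev μhat k lst) := by
    intro j hj
    have hmp := measurePreserving_comp_perm P (Equiv.swap j lst)
    have := hmp.measure_preimage (hEmeas lst).nullMeasurableSet
    rw [hpre j hj] at this
    exact this
  -- pointwise counting bound
  have hcount : ∀ data : Fin (n0 + n1 + 1) → (Fin d → ℝ) × ℝ,
      k ≤ (J.filter fun j => data ∈ Ev μhat k j).card := by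
    intro data
    have hrk := rank_count_lemma J (fun i => resid μhat data (data i)) k (by omega)
    refine le_trans hrk (Finset.card_le_card ?_)
    intro j hj
    simp only [Finset.mem_filter] at hj ⊢
    refine ⟨hj.1, ?_⟩
    have hfe : (J.filter fun i => i ≠ j ∧
          resid μhat data (data i) < resid μhat data (data j)) =
        (Finset.univ : Finset (Fin (n0 + n1 + 1))).filter fun i : Fin (n0 + n1 + 1) =>
          n0 ≤ (i : ℕ) ∧ i ≠ j ∧ resid μhat data (data i) < resid μhat data (data j) := by
      rw [hJ, Finset.filter_filter]
    show (Finset.filter (fun i : Fin (n0 + n1 + 1) =>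
        n0 ≤ (i : ℕ) ∧ i ≠ j ∧ resid μhat data (data i) < resid μhat data (data j))
        Finset.univ).card < k
    rw [← hfe]
    convert hj.2 using 2
  -- sum bound
  have hsum : (k : ℝ≥0∞) ≤ ∑ j ∈ J, μ (Ev μhat k j) :=
    count_le_sum_measure μ J _ (fun j _ => hEmeas j) k hcount
  have hsum2 : (k : ℝ≥0∞) ≤ (((n1 + 1 : ℕ) : ℝ≥0∞)) * μ (Ev μhat k lst) := by
    refine hsum.trans_eq ?_
    rw [Finset.sum_congr rfl hμeq, Finset.sum_const, hJcard, nsmul_eq_mul]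
  -- probability lower bound on the rank event
  have hq : ENNReal.ofReal (1 - α) ≤ μ (Ev μhat k lst) := by
    have hb0 : (((n1 + 1 : ℕ) : ℝ≥0∞)) ≠ 0 := by
      simp
    have hbt : (((n1 + 1 : ℕ) : ℝ≥0∞)) ≠ ⊤ := ENNReal.natCast_ne_top _
    have h1 : ((k : ℝ≥0∞)) / (((n1 + 1 : ℕ) : ℝ≥0∞)) ≤ μ (Ev μhat k lst) :=
      (ENNReal.div_le_iff hb0 hbt).2 (by rwa [mul_comm] at hsum2)
    refine le_trans ?_ h1
    rw [← ENNReal.ofReal_natCast k, ← ENNReal.ofReal_natCast (n1 + 1),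
      ← ENNReal.ofReal_div_of_pos (by positivity)]
    apply ENNReal.ofReal_le_ofReal
    rw [le_div_iff₀ (by positivity)]
    push_cast
    push_cast at hk_ge
    linarith
  -- the rank event is contained in the coverage event
  refine le_trans hq (le_trans (measure_mono ?_) le_rfl)
  intro data hdata
  simp only [Ev, Set.mem_setOf_eq] at hdata
  simp only [Set.mem_setOf_eq]
  show resid μhat data (data lst) ≤ kthSmallest (Finset.univ : Finset (Fin n1))
      (fun i => resid μhat data (data ((Fin.natAdd n0 i).castSucc))) k
  apply le_kthSmallest_of_count_lt
  refine lt_of_le_of_lt ?_ hdata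
  apply Finset.card_le_card_of_injOn (fun i => (Fin.natAdd n0 i).castSucc)
  · intro i hi
    simp only [Finset.coe_filter, Finset.mem_coe, Set.mem_setOf_eq, Finset.mem_filter, Finset.mem_univ, true_and] at hi
    refine Finset.mem_filter.2 ⟨Finset.mem_univ _, ?_, ?_, hi⟩
    · simp
    · intro hc
      have := congrArg Fin.val hc
      simp only [Fin.coe_castSucc, Fin.coe_natAdd, hlst, Fin.val_last] at this
      omega
  · intro a _ b _ hab
    have := congrArg Fin.val hab
    simp only [Fin.coe_castSucc, Fin.coe_natAdd] at this
    exact Fin.ext (by omega)
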